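/- Assume the discrete IE condition ∑_{j=0}^{k_c} φ_j φ_jᵀ ≥ C_d I_p with C_d > 0, and let F_k⁻¹ = β^{k+1} f₀ I_p + β^k ∑_{j=0}^{k} β^{-j} φ_j φ_jᵀ with β ∈ (0,1], f₀ > 0. Then for every k ≥ k_c the matrix I_p - f₀ β^{k+1} F_k is nonsingular; in particular Δ_k := det(I_p - f₀ β^{k+1} F_k) ≠ 0 for k ≥ k_c. -/

import Mathlib

open Matrix Finset

lemma psd_smul_vecMulVec {p : ℕ} {c : ℝ} (hc : 0 ≤ c) (v : Fin p → ℝ) :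
    (c • vecMulVec v v).PosSemidef := by
  refine Matrix.PosSemidef.of_dotProduct_mulVec_nonneg ?_ ?_
  · ext i j
    simp [vecMulVec_apply, mul_comm]
  · intro x
    have h : (star x) ⬝ᵥ ((c • vecMulVec v v) *ᵥ x) = c * ((v ⬝ᵥ x) * (v ⬝ᵥ x)) := by
      simp only [star_trivial, dotProduct, mulVec, Matrix.smul_apply, vecMulVec_apply,
        smul_eq_mul, Finset.mul_sum, Finset.sum_mul]
      rw [Finset.sum_comm]
      congr 1; ext i; congr 1; ext j; ring
    rw [h]
    exact mul_nonneg hc (mul_self_nonneg _)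

lemma psd_sum {p : ℕ} (s : Finset ℕ) (f : ℕ → Matrix (Fin p) (Fin p) ℝ)
    (h : ∀ j ∈ s, (f j).PosSemidef) : (∑ j ∈ s, f j).PosSemidef := by
  classical
  induction s using Finset.induction with
  | empty => simpa using (Matrix.PosSemidef.zero : (0 : Matrix (Fin p) (Fin p) ℝ).PosSemidef)
  | insert _ _ hx ih =>
    rw [Finset.sum_insert hx]
    exact (h _ (Finset.mem_insert_self _ _)).add (ih fun j hj => h j (Finset.mem_insert_of_mem hj))

/-- under discrete interval excitation, `I - f₀ β^{k+1} F_k` is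
nonsingular for all `k ≥ k_c`; in particular its determinant is nonzero. -/
theorem stmt15 {p : ℕ} (φ : ℕ → Fin p → ℝ) (β f₀ C_d : ℝ) (k_c : ℕ)
    (hβ0 : 0 < β) (hβ1 : β ≤ 1) (hf₀ : 0 < f₀) (hCd : 0 < C_d)
    (F : ℕ → Matrix (Fin p) (Fin p) ℝ)
    (hFu : ∀ k, IsUnit (F k))
    (hFinv : ∀ k : ℕ, (F k)⁻¹ =
      (β ^ (k + 1) * f₀) • (1 : Matrix (Fin p) (Fin p) ℝ) +
      β ^ k • ∑ j ∈ Finset.range (k + 1), (β⁻¹) ^ j • vecMulVec (φ j) (φ j))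
    (hIE : ((∑ j ∈ Finset.range (k_c + 1), vecMulVec (φ j) (φ j)) -
      C_d • (1 : Matrix (Fin p) (Fin p) ℝ)).PosSemidef) :
    ∀ k : ℕ, k_c ≤ k →
      IsUnit ((1 : Matrix (Fin p) (Fin p) ℝ) - (f₀ * β ^ (k + 1)) • F k) ∧
      ((1 : Matrix (Fin p) (Fin p) ℝ) - (f₀ * β ^ (k + 1)) • F k).det ≠ 0 := by
  intro k hk
  have hβinv : (1 : ℝ) ≤ β⁻¹ := (one_le_inv₀ hβ0).mpr hβ1
  set S : Matrix (Fin p) (Fin p) ℝ :=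
    ∑ j ∈ Finset.range (k + 1), (β⁻¹) ^ j • vecMulVec (φ j) (φ j) with hSdef
  set T : Matrix (Fin p) (Fin p) ℝ :=
    ∑ j ∈ Finset.range (k_c + 1), vecMulVec (φ j) (φ j) with hTdef
  -- S - T is PSD
  have hST : (S - T).PosSemidef := by
    have hsplit : S = (∑ j ∈ Finset.range (k_c + 1), (β⁻¹) ^ j • vecMulVec (φ j) (φ j)) +
        ∑ j ∈ Finset.Ico (k_c + 1) (k + 1), (β⁻¹) ^ j • vecMulVec (φ j) (φ j) := by
      rw [hSdef, Finset.range_eq_Ico, Finset.range_eq_Ico]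
      exact (Finset.sum_Ico_consecutive (fun j => (β⁻¹) ^ j • vecMulVec (φ j) (φ j)) (n := k_c + 1) (k := k + 1) (Nat.zero_le _) (by omega)).symm
    have h1 : (S - T) = (∑ j ∈ Finset.range (k_c + 1),
        ((β⁻¹) ^ j - 1) • vecMulVec (φ j) (φ j)) +
        ∑ j ∈ Finset.Ico (k_c + 1) (k + 1), (β⁻¹) ^ j • vecMulVec (φ j) (φ j) := by
      rw [hsplit, hTdef, add_sub_right_comm, ← Finset.sum_sub_distrib]
      congr 1
      · refine Finset.sum_congr rfl fun j _ => ?_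
        rw [sub_smul, one_smul]
    rw [h1]
    refine Matrix.PosSemidef.add ?_ ?_
    · refine psd_sum _ _ fun j _ => psd_smul_vecMulVec ?_ _
      have : (1 : ℝ) ≤ (β⁻¹) ^ j := one_le_pow₀ hβinv
      linarith
    · exact psd_sum _ _ fun j _ => psd_smul_vecMulVec (pow_nonneg (by positivity) j) _
  -- S is positive definite
  have hCdI : (C_d • (1 : Matrix (Fin p) (Fin p) ℝ)).PosDef := by
    have : C_d • (1 : Matrix (Fin p) (Fin p) ℝ) = Matrix.diagonal (fun _ => C_d) := by
      ext i j
      by_cases h : i = j <;> simp [Matrix.one_apply, Matrix.diagonal, h]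
    rw [this]
    exact Matrix.PosDef.diagonal fun _ => hCd
  have hS : S.PosDef := by
    have hdiff : (S - C_d • (1 : Matrix (Fin p) (Fin p) ℝ)).PosSemidef := by
      have : S - C_d • (1 : Matrix (Fin p) (Fin p) ℝ) =
          (S - T) + (T - C_d • (1 : Matrix (Fin p) (Fin p) ℝ)) := by abel
      rw [this]
      exact hST.add hIE
    have := Matrix.PosDef.posSemidef_add hdiff hCdI
    simpa using this
  -- the key identity
  have h1 : F k * (F k)⁻¹ = 1 :=
    Matrix.mul_nonsing_inv _ ((Matrix.isUnit_iff_isUnit_det _).mp (hFu k))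
  rw [hFinv k] at h1
  rw [Matrix.mul_add, Matrix.mul_smul, Matrix.mul_smul, mul_one] at h1
  have hkey : (1 : Matrix (Fin p) (Fin p) ℝ) - (f₀ * β ^ (k + 1)) • F k =
      β ^ k • (F k * S) := by
    rw [mul_comm f₀, ← h1]
    abel
  have hdet : ((1 : Matrix (Fin p) (Fin p) ℝ) - (f₀ * β ^ (k + 1)) • F k).det ≠ 0 := by
    rw [hkey, Matrix.det_smul, Matrix.det_mul]
    have hFdet : (F k).det ≠ 0 :=
      ((Matrix.isUnit_iff_isUnit_det _).mp (hFu k)).ne_zero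
    exact mul_ne_zero (pow_ne_zero _ (pow_ne_zero _ hβ0.ne'))
      (mul_ne_zero hFdet hS.det_pos.ne')
  exact ⟨(Matrix.isUnit_iff_isUnit_det _).mpr (isUnit_iff_ne_zero.mpr hdet), hdet⟩
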